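/- In the setting of the discrete pNACOK scheme, suppose τ ≤ 1/(3C₀), A ≥ 0, B ≥ 0, and suppose U^{n−1}, U^n, U^{n+1} ∈ V satisfy the second-order BDF scheme (3U^{n+1} − 4U^n + U^{n−1})/(2τ) = −ε L U^{n+1} − (1/ε)(2W'(U^n) − W'(U^{n−1})) − γ B Λ(U^{n+1} − 2U^n + U^{n−1}) − A (U^{n+1} − 2U^n + U^{n−1}) − γ Λ(2U^n − U^{n−1} − ω𝟙) − M ⟨2U^n − U^{n−1} − ω𝟙, 𝟙⟩ 𝟙, where W' is applied componentwise. Then the modified energy is nonincreasing: Ẽ(U^{n+1}, U^n) ≤ Ẽ(U^n, U^{n−1}). -/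

import Mathlib

open Real

/-- Discrete inner product `⟨f, g⟩ = c · Σ_j f_j g_j` on `V = Fin m → ℝ`. -/
noncomputable def dip (m : ℕ) (c : ℝ) (f g : Fin m → ℝ) : ℝ :=
  c * ∑ j, f j * g j

/-- Discrete norm induced by `dip`. -/
noncomputable def dnorm (m : ℕ) (c : ℝ) (f : Fin m → ℝ) : ℝ :=
  Real.sqrt (dip m c f f)

/-- The all-ones vector `𝟙`. -/
def ones (m : ℕ) : Fin m → ℝ := fun _ => 1

/-- Discrete pNOK energy
`E(U) = (ε/2)⟨LU,U⟩ + (1/ε)⟨W(U),𝟙⟩ + (γ/2)⟨Λ(U−ω𝟙),U−ω𝟙⟩ + (M/2)⟨U−ω𝟙,𝟙⟩²`. -/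
noncomputable def discreteEnergy (m : ℕ) (c ε γ M ω : ℝ)
    (L Λ : (Fin m → ℝ) →ₗ[ℝ] (Fin m → ℝ)) (W : ℝ → ℝ) (U : Fin m → ℝ) : ℝ :=
  ε / 2 * dip m c (L U) U + (1 / ε) * dip m c (fun j => W (U j)) (ones m)
    + γ / 2 * dip m c (Λ (U - ω • ones m)) (U - ω • ones m)
    + M / 2 * (dip m c (U - ω • ones m) (ones m)) ^ 2

/-- Modified energy
`Ẽ(U,V) = E(U) + (A/2 + 1/(4τ) + C₀)‖U−V‖² + (γB/2)⟨Λ(U−V),U−V⟩`. -/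
noncomputable def modifiedEnergy (m : ℕ) (c ε γ M ω A B τ C₀ : ℝ)
    (L Λ : (Fin m → ℝ) →ₗ[ℝ] (Fin m → ℝ)) (W : ℝ → ℝ) (U V : Fin m → ℝ) : ℝ :=
  discreteEnergy m c ε γ M ω L Λ W U
    + (A / 2 + 1 / (4 * τ) + C₀) * (dnorm m c (U - V)) ^ 2
    + γ * B / 2 * dip m c (Λ (U - V)) (U - V)

section aux
variable {m : ℕ} {c : ℝ}

lemma dip_comm (f g : Fin m → ℝ) : dip m c f g = dip m c g f := by
  simp [dip, mul_comm]

lemma dip_add_left (f g h : Fin m → ℝ) :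
    dip m c (f + g) h = dip m c f h + dip m c g h := by
  simp [dip, add_mul, Finset.sum_add_distrib, mul_add]

lemma dip_sub_left (f g h : Fin m → ℝ) :
    dip m c (f - g) h = dip m c f h - dip m c g h := by
  simp [dip, sub_mul, Finset.sum_sub_distrib, mul_sub]

lemma dip_neg_left (f h : Fin m → ℝ) : dip m c (-f) h = -dip m c f h := by
  simp [dip, Finset.sum_neg_distrib]

lemma dip_smul_left (r : ℝ) (f h : Fin m → ℝ) :
    dip m c (r • f) h = r * dip m c f h := by
  simp only [dip, Pi.smul_apply, smul_eq_mul, mul_assoc]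
  rw [← Finset.mul_sum]
  ring

lemma dip_sub_right (f g h : Fin m → ℝ) :
    dip m c f (g - h) = dip m c f g - dip m c f h := by
  rw [dip_comm, dip_sub_left, dip_comm g f, dip_comm h f]

lemma dip_self_nonneg (hc : 0 ≤ c) (f : Fin m → ℝ) : 0 ≤ dip m c f f :=
  mul_nonneg hc (Finset.sum_nonneg fun j _ => mul_self_nonneg _)

lemma dnorm_nonneg (f : Fin m → ℝ) : 0 ≤ dnorm m c f := Real.sqrt_nonneg _

lemma dnorm_sq (hc : 0 ≤ c) (f : Fin m → ℝ) : dnorm m c f ^ 2 = dip m c f f := by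
  rw [dnorm, Real.sq_sqrt (dip_self_nonneg hc f)]

lemma abs_dip_le (hc : 0 ≤ c) (f g : Fin m → ℝ) :
    |dip m c f g| ≤ dnorm m c f * dnorm m c g := by
  rw [dnorm, dnorm, ← Real.sqrt_mul (dip_self_nonneg hc f)]
  rw [← Real.sqrt_sq_eq_abs]
  apply Real.sqrt_le_sqrt
  have h := Finset.sum_mul_sq_le_sq_mul_sq Finset.univ f g
  have h2 : dip m c f f * dip m c g g = c^2 * ((∑ j, f j ^2) * (∑ j, g j ^2)) := by
    simp only [dip, pow_two]; ring
  have h3 : dip m c f g ^ 2 = c^2 * (∑ j, f j * g j)^2 := by simp only [dip]; ring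
  rw [h2, h3]
  exact mul_le_mul_of_nonneg_left h (sq_nonneg c)

lemma dip_le (hc : 0 ≤ c) (f g : Fin m → ℝ) :
    dip m c f g ≤ dnorm m c f * dnorm m c g :=
  (le_abs_self _).trans (abs_dip_le hc f g)

lemma dip_sa_key (T : (Fin m → ℝ) →ₗ[ℝ] (Fin m → ℝ))
    (hsa : ∀ f g, dip m c (T f) g = dip m c f (T g))
    (hpsd : ∀ f, 0 ≤ dip m c (T f) f) (x y : Fin m → ℝ) :
    (dip m c (T x) x - dip m c (T y) y) / 2 ≤ dip m c (T x) (x - y) := by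
  have h0 := hpsd (x - y)
  rw [map_sub, dip_sub_left, dip_sub_right, dip_sub_right] at h0
  have hxy : dip m c (T y) x = dip m c (T x) y := by
    rw [hsa y x, dip_comm]
  rw [dip_sub_right]
  linarith

lemma dip_sa_swap (T : (Fin m → ℝ) →ₗ[ℝ] (Fin m → ℝ))
    (hsa : ∀ f g, dip m c (T f) g = dip m c f (T g)) (u v : Fin m → ℝ) :
    dip m c (T u) v = dip m c (T v) u := by
  rw [hsa u v, dip_comm]

end aux

section wlemmas
variable {W : ℝ → ℝ} {LW : ℝ}

lemma deriv_lipschitz (hW : ContDiff ℝ 2 W) (hLW : 0 ≤ LW)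
    (hW2 : ∀ s : ℝ, |deriv (deriv W) s| ≤ LW) (s t : ℝ) :
    |deriv W t - deriv W s| ≤ LW * |t - s| := by
  have h2 : ContDiff ℝ ((1:WithTop ℕ∞) + 1) W := by
    exact_mod_cast hW
  have hW1 : ContDiff ℝ 1 (deriv W) := (contDiff_succ_iff_deriv.mp h2).2.2
  have := Convex.norm_image_sub_le_of_norm_deriv_le (f := deriv W) (s := Set.univ)
    (fun x _ => (hW1.differentiable one_ne_zero).differentiableAt)
    (fun x _ => by simpa [Real.norm_eq_abs] using hW2 x) convex_univ
    (Set.mem_univ s) (Set.mem_univ t)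
  simpa [Real.norm_eq_abs] using this

lemma taylor_upper (hW : ContDiff ℝ 2 W) (hLW : 0 ≤ LW)
    (hW2 : ∀ s : ℝ, |deriv (deriv W) s| ≤ LW) (s t : ℝ) :
    W t ≤ W s + deriv W s * (t - s) + LW / 2 * (t - s) ^ 2 := by
  have h2 : ContDiff ℝ ((1:WithTop ℕ∞) + 1) W := by exact_mod_cast hW
  have hWd : Differentiable ℝ W := hW.differentiable (by norm_num)
  have hW1 : ContDiff ℝ 1 (deriv W) := (contDiff_succ_iff_deriv.mp h2).2.2
  have hW'd : Differentiable ℝ (deriv W) := hW1.differentiable one_ne_zero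
  set g : ℝ → ℝ := fun u => LW / 2 * u ^ 2 - W u with hg
  have hg' : ∀ u, HasDerivAt g (LW * u - deriv W u) u := by
    intro u
    have h1 : HasDerivAt (fun u : ℝ => LW / 2 * u ^ 2) (LW / 2 * (2 * u ^ 1)) u :=
      (hasDerivAt_pow 2 u).const_mul (LW / 2)
    have := h1.sub (hWd u).hasDerivAt
    refine this.congr_deriv ?_
    ring
  have hgderiv : deriv g = fun u => LW * u - deriv W u := funext fun u => (hg' u).deriv
  have hgd : Differentiable ℝ g := fun u => (hg' u).differentiableAt
  have hg'd : Differentiable ℝ (deriv g) := by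
    rw [hgderiv]
    exact (differentiable_id.const_mul LW).sub hW'd
  have hg2 : ∀ x, 0 ≤ (deriv^[2] g) x := by
    intro x
    have h1 : deriv^[2] g x = deriv (deriv g) x := by
      simp [Function.iterate_succ, Function.iterate_zero]
    have h2' : HasDerivAt (fun u => LW * u - deriv W u) (LW - deriv (deriv W) x) x := by
      have := ((hasDerivAt_id x).const_mul LW).sub (hW'd x).hasDerivAt
      exact this.congr_deriv (by ring)
    rw [h1, hgderiv, h2'.deriv]
    have := (abs_le.mp (hW2 x)).2
    linarith
  have hconv : ConvexOn ℝ Set.univ g := convexOn_univ_of_deriv2_nonneg hgd hg'd hg2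
  rcases lt_trichotomy s t with h | h | h
  · have hs := hconv.deriv_le_slope (Set.mem_univ s) (Set.mem_univ t) h (hgd s)
    rw [slope_def_field, (hg' s).deriv] at hs
    have hts : 0 < t - s := sub_pos.mpr h
    have := (le_div_iff₀ hts).mp hs
    simp only [hg] at this
    nlinarith [this]
  · subst h; nlinarith [hLW]
  · have hs := hconv.slope_le_deriv (Set.mem_univ t) (Set.mem_univ s) h (hgd s)
    rw [slope_def_field, (hg' s).deriv] at hs
    have hts : 0 < s - t := sub_pos.mpr h
    have := (div_le_iff₀ hts).mp hs
    simp only [hg] at this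
    nlinarith [this]

end wlemmas

set_option maxHeartbeats 2000000 in
theorem bdf2_modified_energy_dissipation (m : ℕ) (hm : 1 ≤ m) (c : ℝ) (hc : 0 < c)
    (L Λ : (Fin m → ℝ) →ₗ[ℝ] (Fin m → ℝ))
    (hLsa : ∀ f g, dip m c (L f) g = dip m c f (L g))
    (hLpsd : ∀ f, 0 ≤ dip m c (L f) f)
    (hΛsa : ∀ f g, dip m c (Λ f) g = dip m c f (Λ g))
    (hΛpsd : ∀ f, 0 ≤ dip m c (Λ f) f)
    (K : ℝ) (hK : 0 ≤ K)
    (hΛbdd : ∀ f g, dip m c (Λ f) g ≤ K * dnorm m c f * dnorm m c g)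
    (W : ℝ → ℝ) (hW : ContDiff ℝ 2 W)
    (LW : ℝ) (hLW : 0 < LW) (hW2 : ∀ s : ℝ, |deriv (deriv W) s| ≤ LW)
    (ε γ M τ : ℝ) (hε : 0 < ε) (hγ : 0 < γ) (hM : 0 < M) (hτ : 0 < τ)
    (A B : ℝ) (hA : 0 ≤ A) (hB : 0 ≤ B) (ω : ℝ)
    (C₀ : ℝ) (hC₀ : C₀ = LW / (2 * ε) + γ * K / 2 + M * (c * m) / 2)
    (hτC : τ ≤ 1 / (3 * C₀))
    (Um1 U0 U1 : Fin m → ℝ)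
    (hscheme : (1 / (2 * τ)) • ((3:ℝ) • U1 - (4:ℝ) • U0 + Um1) =
      -(ε • L U1)
        - (1 / ε) • (fun j => 2 * deriv W (U0 j) - deriv W (Um1 j))
        - (γ * B) • Λ (U1 - (2:ℝ) • U0 + Um1)
        - A • (U1 - (2:ℝ) • U0 + Um1)
        - γ • Λ ((2:ℝ) • U0 - Um1 - ω • ones m)
        - (M * dip m c ((2:ℝ) • U0 - Um1 - ω • ones m) (ones m)) • ones m) :
    modifiedEnergy m c ε γ M ω A B τ C₀ L Λ W U1 U0
      ≤ modifiedEnergy m c ε γ M ω A B τ C₀ L Λ W U0 Um1 := by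
  simp only [modifiedEnergy, discreteEnergy]
  have hc' : (0:ℝ) ≤ c := hc.le
  have hcm : (0:ℝ) ≤ c * m := by positivity
  have hC₀pos : 0 < C₀ := by
    rw [hC₀]
    have h1 : 0 < LW / (2*ε) := by positivity
    nlinarith [mul_nonneg hγ.le hK, mul_nonneg hM.le hcm]
  have hτ3 : 3 * C₀ ≤ 1 / τ := by
    rw [le_div_iff₀ hτ]
    rw [le_div_iff₀ (by linarith : (0:ℝ) < 3 * C₀)] at hτC
    nlinarith
  set δ := U1 - U0 with hδd
  set δ0 := U0 - Um1 with hδ0d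
  set P1 := U1 - ω • ones m with hP1
  set P0 := U0 - ω • ones m with hP0
  clear_value δ δ0 P1 P0
  have hev : U1 - (2:ℝ) • U0 + Um1 = δ - δ0 := by rw [hδd, hδ0d]; module
  have h3v : (3:ℝ) • U1 - (4:ℝ) • U0 + Um1 = (2:ℝ) • δ + (δ - δ0) := by
    rw [hδd, hδ0d]; module
  have hPv : (2:ℝ) • U0 - Um1 - ω • ones m = P1 - (δ - δ0) := by
    rw [hP1, hδd, hδ0d]; module
  have hP10 : P1 - P0 = δ := by rw [hP1, hP0, hδd]; module
  have h := congrArg (fun v => dip m c v δ) hscheme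
  rw [h3v, hev, hPv] at h
  simp only [map_sub, dip_smul_left, dip_add_left, dip_sub_left, dip_neg_left] at h
  rw [dip_comm (ones m) δ] at h
  -- key quadratic-form estimates
  have hL1 : (dip m c (L U1) U1 - dip m c (L U0) U0) / 2 ≤ dip m c (L U1) δ := by
    have := dip_sa_key L hLsa hLpsd U1 U0
    rwa [← hδd] at this
  have hΛP : (dip m c (Λ P1) P1 - dip m c (Λ P0) P0) / 2 ≤ dip m c (Λ P1) δ := by
    have := dip_sa_key Λ hΛsa hΛpsd P1 P0
    rwa [hP10] at this
  have hΛδ : (dip m c (Λ δ) δ - dip m c (Λ δ0) δ0) / 2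
      ≤ dip m c (Λ δ) δ - dip m c (Λ δ0) δ := by
    have h1 := dip_sa_key Λ hΛsa hΛpsd δ δ0
    rw [dip_sub_right (Λ δ) δ δ0] at h1
    have h2 : dip m c (Λ δ) δ0 = dip m c (Λ δ0) δ := dip_sa_swap Λ hΛsa δ δ0
    linarith
  have hΛe : dip m c (Λ δ) δ - dip m c (Λ δ0) δ
      ≤ K * dnorm m c (δ - δ0) * dnorm m c δ := by
    have := hΛbdd (δ - δ0) δ
    rwa [map_sub, dip_sub_left] at this
  -- norm facts
  have hnδ : dnorm m c δ ^ 2 = dip m c δ δ := dnorm_sq hc' δ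
  have hn0 : dnorm m c δ0 ^ 2 = dip m c δ0 δ0 := dnorm_sq hc' δ0
  have hne : dnorm m c (δ - δ0) ^ 2
      = dip m c δ δ - 2 * dip m c δ0 δ + dip m c δ0 δ0 := by
    rw [dnorm_sq hc']
    simp only [dip_sub_left, dip_sub_right]
    rw [dip_comm δ δ0]
    ring
  have hq : 0 ≤ dip m c δ δ - 2 * dip m c δ0 δ + dip m c δ0 δ0 := by
    rw [← hne]; positivity
  have hones : dnorm m c (ones m) ^ 2 = c * m := by
    rw [dnorm_sq hc']; simp [dip, ones]
  -- M-term estimates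
  have hdd0 : dip m c δ (ones m) - dip m c δ0 (ones m) = dip m c (δ - δ0) (ones m) :=
    (dip_sub_left _ _ _).symm
  have hMd : (dip m c δ (ones m) - dip m c δ0 (ones m)) * dip m c δ (ones m)
      ≤ (c * m) * (dnorm m c (δ - δ0) * dnorm m c δ) := by
    have e1 := abs_dip_le hc' (δ - δ0) (ones m)
    have e2 := abs_dip_le hc' δ (ones m)
    calc (dip m c δ (ones m) - dip m c δ0 (ones m)) * dip m c δ (ones m)
        = dip m c (δ - δ0) (ones m) * dip m c δ (ones m) := by rw [hdd0]
      _ ≤ |dip m c (δ - δ0) (ones m) * dip m c δ (ones m)| := le_abs_self _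
      _ = |dip m c (δ - δ0) (ones m)| * |dip m c δ (ones m)| := abs_mul _ _
      _ ≤ (dnorm m c (δ - δ0) * dnorm m c (ones m)) * (dnorm m c δ * dnorm m c (ones m)) :=
          mul_le_mul e1 e2 (abs_nonneg _) (mul_nonneg (dnorm_nonneg _) (dnorm_nonneg _))
      _ = dnorm m c (ones m) ^ 2 * (dnorm m c (δ - δ0) * dnorm m c δ) := by ring
      _ = (c * m) * (dnorm m c (δ - δ0) * dnorm m c δ) := by rw [hones]
  have had : dip m c P1 (ones m) - dip m c P0 (ones m) = dip m c δ (ones m) := by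
    rw [← dip_sub_left, hP10]
  have ha1 : (dip m c P1 (ones m) ^ 2 - dip m c P0 (ones m) ^ 2) / 2
      ≤ dip m c P1 (ones m) * dip m c δ (ones m) := by
    rw [← had]
    nlinarith [sq_nonneg (dip m c P1 (ones m) - dip m c P0 (ones m))]
  -- W-term estimates
  have hGsplit : dip m c (fun j => 2 * deriv W (U0 j) - deriv W (Um1 j)) δ
      = dip m c (fun j => deriv W (U0 j)) δ
        + dip m c (fun j => deriv W (U0 j) - deriv W (Um1 j)) δ := by
    rw [← dip_add_left]
    congr 1
    funext j
    simp only [Pi.add_apply]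
    ring
  have hTay : dip m c (fun j => W (U1 j)) (ones m) - dip m c (fun j => W (U0 j)) (ones m)
      - LW / 2 * dip m c δ δ ≤ dip m c (fun j => deriv W (U0 j)) δ := by
    have hsum : (∑ j, W (U1 j)) - (∑ j, W (U0 j)) - LW / 2 * (∑ j, δ j * δ j)
        ≤ ∑ j, deriv W (U0 j) * δ j := by
      rw [← Finset.sum_sub_distrib, Finset.mul_sum, ← Finset.sum_sub_distrib]
      apply Finset.sum_le_sum
      intro j _
      have ht := taylor_upper hW hLW.le hW2 (U0 j) (U1 j)
      have hδj : δ j = U1 j - U0 j := by rw [hδd]; rfl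
      rw [hδj]; nlinarith [ht]
    have := mul_le_mul_of_nonneg_left hsum hc'
    simp only [dip, ones, mul_one]
    linarith [this]
  have hLip : -(LW * (dnorm m c δ0 * dnorm m c δ))
      ≤ dip m c (fun j => deriv W (U0 j) - deriv W (Um1 j)) δ := by
    have habs : dip m c (fun j => |δ0 j|) (fun j => |δ j|)
        ≤ dnorm m c (fun j => |δ0 j|) * dnorm m c (fun j => |δ j|) := dip_le hc' _ _
    have hab0 : dnorm m c (fun j => |δ0 j|) = dnorm m c δ0 := by
      unfold dnorm; congr 1; simp [dip, abs_mul_abs_self]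
    have habδ : dnorm m c (fun j => |δ j|) = dnorm m c δ := by
      unfold dnorm; congr 1; simp [dip, abs_mul_abs_self]
    rw [hab0, habδ] at habs
    have hsum : ∑ j, -(LW * (|δ0 j| * |δ j|)) ≤ ∑ j, (deriv W (U0 j) - deriv W (Um1 j)) * δ j := by
      apply Finset.sum_le_sum
      intro j _
      have hl := deriv_lipschitz hW hLW.le hW2 (Um1 j) (U0 j)
      have hδ0j : δ0 j = U0 j - Um1 j := by rw [hδ0d]; rfl
      rw [← hδ0j] at hl
      have h1 : |(deriv W (U0 j) - deriv W (Um1 j)) * δ j| ≤ LW * |δ0 j| * |δ j| := by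
        rw [abs_mul]
        exact mul_le_mul_of_nonneg_right hl (abs_nonneg _)
      have h2 := neg_abs_le ((deriv W (U0 j) - deriv W (Um1 j)) * δ j)
      linarith
    have h2 := mul_le_mul_of_nonneg_left hsum hc'
    have h3 : c * ∑ j, -(LW * (|δ0 j| * |δ j|))
        = -(LW * (c * ∑ j, |δ0 j| * |δ j|)) := by
      rw [Finset.sum_neg_distrib, ← Finset.mul_sum]; ring
    have h4 := mul_le_mul_of_nonneg_left habs hLW.le
    simp only [dip] at h3 habs ⊢
    nlinarith [h2, h4]
  have hW5 : dip m c (fun j => W (U1 j)) (ones m) - dip m c (fun j => W (U0 j)) (ones m)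
      - LW / 2 * dip m c δ δ - LW * (dnorm m c δ0 * dnorm m c δ)
      ≤ dip m c (fun j => 2 * deriv W (U0 j) - deriv W (Um1 j)) δ := by
    rw [hGsplit]; linarith
  -- scaled versions
  have sb1 := mul_le_mul_of_nonneg_left hL1 hε.le
  have sb2 := mul_le_mul_of_nonneg_left hΛP hγ.le
  have sb3 := mul_le_mul_of_nonneg_left hΛδ (mul_nonneg hγ.le hB)
  have sb4 := mul_le_mul_of_nonneg_left hΛe hγ.le
  have sb5 := mul_le_mul_of_nonneg_left hW5 (by positivity : (0:ℝ) ≤ 1/ε)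
  have sb6 : A * ((dip m c δ δ - dip m c δ0 δ0) / 2)
      ≤ A * (dip m c δ δ - dip m c δ0 δ) :=
    mul_le_mul_of_nonneg_left (by linarith) hA
  have sb7 := mul_le_mul_of_nonneg_left hMd hM.le
  have sb8 := mul_le_mul_of_nonneg_left ha1 hM.le
  -- AM-GM bounds for the cross terms
  have hAM1 : 1/ε * (LW/2) * (2 * (dnorm m c δ0 * dnorm m c δ))
      ≤ 1/ε * (LW/2) * (dip m c δ0 δ0 + dip m c δ δ) :=
    mul_le_mul_of_nonneg_left
      (by nlinarith [sq_nonneg (dnorm m c δ0 - dnorm m c δ), hn0, hnδ]) (by positivity)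
  have hDnn : (0:ℝ) ≤ γ * K / 2 + M * (c * m) / 2 := by
    have := mul_nonneg hγ.le hK
    have := mul_nonneg hM.le hcm
    linarith
  have hAM2 : (γ * K / 2 + M * (c * m) / 2) * (24 * (dnorm m c (δ - δ0) * dnorm m c δ))
      ≤ (γ * K / 2 + M * (c * m) / 2) *
        (9 * (dip m c δ δ - 2 * dip m c δ0 δ + dip m c δ0 δ0) + 16 * dip m c δ δ) :=
    mul_le_mul_of_nonneg_left
      (by nlinarith [sq_nonneg (3 * dnorm m c (δ - δ0) - 4 * dnorm m c δ), hne, hnδ]) hDnn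
  -- time-step bounds
  have ht1 : 3 * C₀ * dip m c δ δ ≤ (1/τ) * dip m c δ δ :=
    mul_le_mul_of_nonneg_right hτ3 (dip_self_nonneg hc' δ)
  have ht2 : 3 * C₀ * (dip m c δ δ - 2 * dip m c δ0 δ + dip m c δ0 δ0)
      ≤ (1/τ) * (dip m c δ δ - 2 * dip m c δ0 δ + dip m c δ0 δ0) :=
    mul_le_mul_of_nonneg_right hτ3 hq
  have hx1 : 0 ≤ (γ * K / 2 + M * (c * m) / 2) * dip m c δ δ :=
    mul_nonneg hDnn (dip_self_nonneg hc' δ)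
  have hx2 : 0 ≤ (γ * K / 2 + M * (c * m) / 2) * dip m c δ0 δ0 :=
    mul_nonneg hDnn (dip_self_nonneg hc' δ0)
  have hx3 : 0 ≤ 1/ε * (LW/2) * (dip m c δ δ - 2 * dip m c δ0 δ + dip m c δ0 δ0) :=
    mul_nonneg (by positivity) hq
  have hτne : τ ≠ 0 := ne_of_gt hτ
  have hτ2 : (1:ℝ)/(2*τ) = 1/τ/2 := by rw [div_div, mul_comm]
  have hτ4 : (1:ℝ)/(4*τ) = 1/τ/4 := by
    rw [div_div, show (4:ℝ)*τ = τ*4 from mul_comm _ _]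
  have hCeq : C₀ = 1/ε * (LW/2) + γ * K / 2 + M * (c * m) / 2 := by
    rw [hC₀]; field_simp
  rw [hτ2] at h
  rw [hCeq] at ht1 ht2 ⊢
  rw [hτ4, hnδ, hn0]
  linarith [h, sb1, sb2, sb3, sb4, sb5, sb6, sb7, sb8, hAM1, hAM2, ht1, ht2, hx1, hx2, hx3]
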